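/- Let η ∈ ℝ, η ≠ 0, and let z, ρ : ℝ² → ℝ be smooth (C^∞) functions of (x,t) satisfying the sine-Gordon equation z_xt = sin z together with the Riccati system ρ_x = −(1/2) z_x ρ² + η ρ − (1/2) z_x and ρ_t = (1/(2η)) (sin z)(1 − ρ²) + (1/η)(cos z) ρ. Then z' := z + 4 arctan ρ satisfies the sine-Gordon equation z'_xt = sin z'. -/

import Mathlib

/-- Partial derivative in the first variable `x`. -/
noncomputable def px (f : ℝ → ℝ → ℝ) : ℝ → ℝ → ℝ := fun x t => deriv (fun y => f y t) x

/-- Partial derivative in the second variable `t`. -/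
noncomputable def pt (f : ℝ → ℝ → ℝ) : ℝ → ℝ → ℝ := fun x t => deriv (fun s => f x s) t

section Helpers
open Function
lemma hasDerivAt_px (f : ℝ → ℝ → ℝ) (hf : ContDiff ℝ (⊤:ℕ∞) (uncurry f)) (x t : ℝ) :
    HasDerivAt (fun y => f y t) (px f x t) x := by
  have h : DifferentiableAt ℝ (fun y => f y t) x :=
    by have := ((hf.differentiable (by simp)) (x, t)).comp (f := fun y : ℝ => (y, t)) x
          ((differentiableAt_id).prodMk (differentiableAt_const t)); exact this
  exact h.hasDerivAt

lemma hasDerivAt_pt (f : ℝ → ℝ → ℝ) (hf : ContDiff ℝ (⊤:ℕ∞) (uncurry f)) (x t : ℝ) :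
    HasDerivAt (fun s => f x s) (pt f x t) t := by
  have h : DifferentiableAt ℝ (fun s => f x s) t :=
    ((hf.differentiable (by simp)) (x, t)).comp t
      ((differentiableAt_const x).prodMk differentiableAt_id)
  exact h.hasDerivAt

lemma contDiff_px (f : ℝ → ℝ → ℝ) (hf : ContDiff ℝ (⊤:ℕ∞) (uncurry f)) :
    ContDiff ℝ (⊤:ℕ∞) (uncurry (px f)) := by
  have key : ∀ p : ℝ × ℝ, uncurry (px f) p = fderiv ℝ (uncurry f) p (1, 0) := by
    rintro ⟨x, t⟩
    have h1 : HasDerivAt (fun y => (y, t)) ((1 : ℝ), (0 : ℝ)) x := by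
      simpa using (hasDerivAt_id x).prodMk (hasDerivAt_const x t)
    have h2 : HasDerivAt (fun y => f y t) (fderiv ℝ (uncurry f) (x, t) (1, 0)) x :=
      by have := (((hf.differentiable (by simp)) (x, t)).hasFDerivAt).comp_hasDerivAt x h1; exact this
    exact h2.deriv
  rw [show uncurry (px f) = fun p => fderiv ℝ (uncurry f) p (1, 0) from funext key]
  exact (hf.fderiv_right (m := (⊤:ℕ∞)) (mod_cast le_top)).clm_apply contDiff_const

lemma sin_four_arctan (r : ℝ) :
    Real.sin (4 * Real.arctan r) = 4 * r * (1 - r ^ 2) / (1 + r ^ 2) ^ 2 := by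
  have h0 : (0:ℝ) < 1 + r ^ 2 := by positivity
  have hsq : Real.sqrt (1 + r ^ 2) * Real.sqrt (1 + r ^ 2) = 1 + r ^ 2 :=
    Real.mul_self_sqrt h0.le
  have hs2 : Real.sin (2 * Real.arctan r) = 2 * r / (1 + r ^ 2) := by
    rw [Real.sin_two_mul, Real.sin_arctan, Real.cos_arctan, mul_assoc, div_mul_div_comm, hsq]
    ring
  have hc2 : Real.cos (2 * Real.arctan r) = (1 - r ^ 2) / (1 + r ^ 2) := by
    rw [Real.cos_two_mul, Real.cos_arctan, div_pow, one_pow, sq, hsq]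
    field_simp
    ring
  rw [show (4:ℝ) * Real.arctan r = 2 * (2 * Real.arctan r) by ring,
    Real.sin_two_mul, hs2, hc2]
  field_simp
  ring

lemma cos_four_arctan (r : ℝ) :
    Real.cos (4 * Real.arctan r) = ((1 - r ^ 2) ^ 2 - 4 * r ^ 2) / (1 + r ^ 2) ^ 2 := by
  have h0 : (0:ℝ) < 1 + r ^ 2 := by positivity
  have hsq : Real.sqrt (1 + r ^ 2) * Real.sqrt (1 + r ^ 2) = 1 + r ^ 2 :=
    Real.mul_self_sqrt h0.le
  have hc2 : Real.cos (2 * Real.arctan r) = (1 - r ^ 2) / (1 + r ^ 2) := by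
    rw [Real.cos_two_mul, Real.cos_arctan, div_pow, one_pow, sq, hsq]
    field_simp
    ring
  rw [show (4:ℝ) * Real.arctan r = 2 * (2 * Real.arctan r) by ring,
    Real.cos_two_mul, hc2]
  field_simp
  ring

end Helpers

/-- the auto-Bäcklund transformation `z' = z + 4 arctan ρ` of the
sine-Gordon equation `z_xt = sin z`, where `ρ` solves the associated Riccati
covering with parameter `η ≠ 0`. -/
theorem sine_gordon_auto_backlund (η : ℝ) (hη : η ≠ 0) (z ρ : ℝ → ℝ → ℝ)
    (hz : ContDiff ℝ (⊤ : ℕ∞) (Function.uncurry z))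
    (hρ : ContDiff ℝ (⊤ : ℕ∞) (Function.uncurry ρ))
    (hsg : ∀ x t, pt (px z) x t = Real.sin (z x t))
    (hρx : ∀ x t, px ρ x t
      = -(1 / 2) * px z x t * (ρ x t) ^ 2 + η * ρ x t - (1 / 2) * px z x t)
    (hρt : ∀ x t, pt ρ x t
      = (1 / (2 * η)) * Real.sin (z x t) * (1 - (ρ x t) ^ 2)
        + (1 / η) * Real.cos (z x t) * ρ x t) :
    ∀ x t,
      pt (px (fun x t => z x t + 4 * Real.arctan (ρ x t))) x t
        = Real.sin (z x t + 4 * Real.arctan (ρ x t)) := by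
  intro x t
  -- Step 1: the x-derivative of z' simplifies to  -z_x + 4η ρ/(1+ρ²)
  have hpx : ∀ s, px (fun x t => z x t + 4 * Real.arctan (ρ x t)) x s
      = -px z x s + 4 * η * (ρ x s / (1 + ρ x s ^ 2)) := by
    intro s
    have h1 := hasDerivAt_px z hz x s
    have h2 := hasDerivAt_px ρ hρ x s
    have h3 : HasDerivAt (fun y => Real.arctan (ρ y s))
        (1 / (1 + ρ x s ^ 2) * px ρ x s) x :=
      by have := (Real.hasDerivAt_arctan (ρ x s)).comp x h2; exact this
    have h4 : deriv (fun y => z y s + 4 * Real.arctan (ρ y s)) x = _ := (h1.add (h3.const_mul 4)).deriv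
    have hne : (1 + ρ x s ^ 2) ≠ 0 := by positivity
    rw [show px (fun x t => z x t + 4 * Real.arctan (ρ x t)) x s
        = deriv (fun y => z y s + 4 * Real.arctan (ρ y s)) x from rfl, h4, hρx x s]
    field_simp
    ring
  -- Step 2: differentiate in t
  have hA : HasDerivAt (fun s => px z x s) (Real.sin (z x t)) t := by
    have h := hasDerivAt_pt (px z) (contDiff_px z hz) x t
    rwa [hsg] at h
  have hR : HasDerivAt (fun s => ρ x s) (pt ρ x t) t := hasDerivAt_pt ρ hρ x t
  set r := ρ x t with hr
  set Rt := pt ρ x t with hRt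
  have hne : (1 + r ^ 2) ≠ 0 := by positivity
  have hden : HasDerivAt (fun s => 1 + ρ x s ^ 2) (0 + 2 * r ^ 1 * Rt) t :=
    (hasDerivAt_const t (1:ℝ)).add (hR.pow 2)
  have hdiv : HasDerivAt (fun s => ρ x s / (1 + ρ x s ^ 2))
      ((Rt * (1 + r ^ 2) - r * (0 + 2 * r ^ 1 * Rt)) / (1 + r ^ 2) ^ 2) t :=
    hR.div hden hne
  have hG : HasDerivAt (fun s => -px z x s + 4 * η * (ρ x s / (1 + ρ x s ^ 2)))
      (-Real.sin (z x t)
        + 4 * η * ((Rt * (1 + r ^ 2) - r * (0 + 2 * r ^ 1 * Rt)) / (1 + r ^ 2) ^ 2)) t :=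
    hA.neg.add (hdiv.const_mul (4 * η))
  have hfun : (fun s => px (fun x t => z x t + 4 * Real.arctan (ρ x t)) x s)
      = fun s => -px z x s + 4 * η * (ρ x s / (1 + ρ x s ^ 2)) := funext hpx
  have hmain : pt (px (fun x t => z x t + 4 * Real.arctan (ρ x t))) x t
      = -Real.sin (z x t)
        + 4 * η * ((Rt * (1 + r ^ 2) - r * (0 + 2 * r ^ 1 * Rt)) / (1 + r ^ 2) ^ 2) := by
    show deriv (fun s => px (fun x t => z x t + 4 * Real.arctan (ρ x t)) x s) t = _
    rw [hfun]
    exact hG.deriv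
  rw [hmain, hRt, hρt x t, Real.sin_add, sin_four_arctan, cos_four_arctan, ← hr]
  field_simp
  ring
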